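/- Let 𝒯 be a pretriangulated category and 𝒯' a thick subcategory of 𝒯 (a strictly full triangulated subcategory closed under direct summands), with inclusion functor i : 𝒯' → 𝒯. Then i admits a right adjoint if and only if for every object A of 𝒯 there exist an object A' of 𝒯' and a morphism f : iA' → A such that, in a distinguished triangle iA' →f A → C → iA'[1], one has Hom_𝒯(iX, C) = 0 for every X ∈ 𝒯'. Moreover, when this holds, every A sits in a distinguished triangle A₁ → A → A₂ → A₁[1] with A₁ in 𝒯' and Hom_𝒯(iX, A₂) = 0 for all X ∈ 𝒯', and this triangle is unique up to isomorphism and functorial in A. -/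

import Mathlib

open CategoryTheory Limits Pretriangulated

section Aux

variable {𝒯 : Type*} [Category 𝒯] [HasZeroObject 𝒯] [Preadditive 𝒯]
    [HasShift 𝒯 ℤ] [∀ n : ℤ, (CategoryTheory.shiftFunctor 𝒯 n).Additive]
    [Pretriangulated 𝒯]

variable (P : 𝒯 → Prop)

/-- Vanishing of maps into `C` transfers to vanishing of maps into `C⟦-1⟧`. -/
lemma aux_vanish_shift (hshift : ∀ (X : 𝒯) (n : ℤ), P X → P (X⟦n⟧))
    {C : 𝒯} (hv : ∀ X : 𝒯, P X → ∀ φ : X ⟶ C, φ = 0)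
    {X : 𝒯} (hX : P X) (φ : X ⟶ C⟦(-1 : ℤ)⟧) : φ = 0 := by
  have h1 : (shiftFunctor 𝒯 (1 : ℤ)).map φ ≫
      (shiftFunctorCompIsoId 𝒯 (-1 : ℤ) (1 : ℤ) (by ring)).hom.app C = 0 :=
    hv _ (hshift X 1 hX) _
  have h2 : (shiftFunctor 𝒯 (1 : ℤ)).map φ = 0 := by
    rw [← cancel_mono ((shiftFunctorCompIsoId 𝒯 (-1 : ℤ) (1 : ℤ) (by ring)).hom.app C),
      zero_comp]
    exact h1
  apply (shiftFunctor 𝒯 (1 : ℤ)).map_injective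
  rw [h2, Functor.map_zero]

/-- If maps from the subcategory into `T.obj₃` vanish, then composition with `T.mor₁`
is injective on maps from the subcategory. -/
lemma aux_cancel (hshift : ∀ (X : 𝒯) (n : ℤ), P X → P (X⟦n⟧))
    {T : Triangle 𝒯} (hT : T ∈ distTriang 𝒯)
    (hv : ∀ X : 𝒯, P X → ∀ φ : X ⟶ T.obj₃, φ = 0)
    {X : 𝒯} (hX : P X) (ψ : X ⟶ T.obj₁) (hψ : ψ ≫ T.mor₁ = 0) : ψ = 0 := by
  obtain ⟨e, he⟩ := Triangle.coyoneda_exact₂ _ (inv_rot_of_distTriang _ hT) ψ hψ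
  have he0 : e = 0 := aux_vanish_shift P hshift hv hX e
  rw [he, he0, zero_comp]; rfl

/-- Orthogonality: a morphism `φ : A ⟶ B` extends uniquely to a morphism of triangles
when `P A₁` and maps from the subcategory into `B₂` vanish. -/
lemma aux_orth (hshift : ∀ (X : 𝒯) (n : ℤ), P X → P (X⟦n⟧))
    {A B : 𝒯} (φ : A ⟶ B)
    {A₁ A₂ : 𝒯} {f : A₁ ⟶ A} {g : A ⟶ A₂} {h : A₂ ⟶ A₁⟦(1 : ℤ)⟧}
    {B₁ B₂ : 𝒯} {f' : B₁ ⟶ B} {g' : B ⟶ B₂} {h' : B₂ ⟶ B₁⟦(1 : ℤ)⟧}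
    (hTA : Triangle.mk f g h ∈ distTriang 𝒯) (hA₁ : P A₁)
    (hTB : Triangle.mk f' g' h' ∈ distTriang 𝒯)
    (hvB : ∀ X : 𝒯, P X → ∀ ψ : X ⟶ B₂, ψ = 0) :
    ∃! u : Triangle.mk f g h ⟶ Triangle.mk f' g' h', u.hom₂ = φ := by
  have huniq : ∀ u v : Triangle.mk f g h ⟶ Triangle.mk f' g' h',
      u.hom₂ = v.hom₂ → u = v := by
    intro u v huv
    have h1 : u.hom₁ = v.hom₁ := by
      have cu := u.comm₁
      have cv := v.comm₁
      have e1 : (u.hom₁ - v.hom₁) ≫ (Triangle.mk f' g' h').mor₁ = 0 := by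
        rw [Preadditive.sub_comp, ← cu, ← cv, huv, sub_self]
      have := aux_cancel P hshift hTB hvB hA₁ (u.hom₁ - v.hom₁) e1
      exact sub_eq_zero.mp this
    have h3 : u.hom₃ = v.hom₃ := by
      have cu := u.comm₂
      have cv := v.comm₂
      have e3 : (Triangle.mk f g h).mor₂ ≫ (u.hom₃ - v.hom₃) = 0 := by
        rw [Preadditive.comp_sub, cu, cv, huv, sub_self]
      obtain ⟨w, hw⟩ := Triangle.yoneda_exact₃ _ hTA _ e3
      have hw0 : w = 0 := hvB _ (hshift A₁ 1 hA₁) w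
      have : u.hom₃ - v.hom₃ = 0 := by rw [hw, hw0, comp_zero]
      exact sub_eq_zero.mp this
    exact TriangleMorphism.ext h1 huv h3
  obtain ⟨a, ha⟩ := Triangle.coyoneda_exact₂ _ hTB (f ≫ φ)
    (by change (f ≫ φ) ≫ g' = 0; rw [Category.assoc]; exact hvB A₁ hA₁ _)
  obtain ⟨c, hc₁, hc₂⟩ := complete_distinguished_triangle_morphism _ _ hTA hTB a φ ha
  exact ⟨⟨a, φ, c, ha, hc₁, hc₂⟩, rfl, fun v hv => huniq v _ (by rw [hv])⟩

end Aux

theorem stmt_19 {𝒯 : Type*} [Category 𝒯] [HasZeroObject 𝒯] [Preadditive 𝒯]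
    [HasShift 𝒯 ℤ] [∀ n : ℤ, (CategoryTheory.shiftFunctor 𝒯 n).Additive]
    [Pretriangulated 𝒯]
    (P : 𝒯 → Prop)
    (hzero : ∃ Z : 𝒯, IsZero Z ∧ P Z)
    (hiso : ∀ (X Y : 𝒯), (X ≅ Y) → P X → P Y)
    (hshift : ∀ (X : 𝒯) (n : ℤ), P X → P (X⟦n⟧))
    (hext : ∀ T : Triangle 𝒯, T ∈ (distTriang 𝒯) → P T.obj₁ → P T.obj₂ → P T.obj₃)
    (hsummand : ∀ (X Y : 𝒯) (s : X ⟶ Y) (r : Y ⟶ X), s ≫ r = 𝟙 X → P Y → P X) :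
    ((∃ p : 𝒯 ⥤ ObjectProperty.FullSubcategory P, Nonempty (ObjectProperty.ι P ⊣ p)) ↔
      (∀ A : 𝒯, ∃ (A' : 𝒯) (_ : P A') (f : A' ⟶ A) (C : 𝒯) (g : A ⟶ C)
          (h : C ⟶ A'⟦(1 : ℤ)⟧),
        Triangle.mk f g h ∈ (distTriang 𝒯) ∧
        ∀ X : 𝒯, P X → ∀ φ : X ⟶ C, φ = 0)) ∧
    ((∃ p : 𝒯 ⥤ ObjectProperty.FullSubcategory P, Nonempty (ObjectProperty.ι P ⊣ p)) →
      (∀ A : 𝒯, ∃ (A₁ A₂ : 𝒯) (f : A₁ ⟶ A) (g : A ⟶ A₂) (h : A₂ ⟶ A₁⟦(1 : ℤ)⟧),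
        (Triangle.mk f g h ∈ (distTriang 𝒯) ∧ P A₁ ∧
          ∀ X : 𝒯, P X → ∀ φ : X ⟶ A₂, φ = 0) ∧
        (∀ (B₁ B₂ : 𝒯) (f' : B₁ ⟶ A) (g' : A ⟶ B₂) (h' : B₂ ⟶ B₁⟦(1 : ℤ)⟧),
          Triangle.mk f' g' h' ∈ (distTriang 𝒯) → P B₁ →
          (∀ X : 𝒯, P X → ∀ φ : X ⟶ B₂, φ = 0) →
          ∃ e : Triangle.mk f g h ≅ Triangle.mk f' g' h', e.hom.hom₂ = 𝟙 A)) ∧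
      (∀ (A B : 𝒯) (φ : A ⟶ B)
          (A₁ A₂ : 𝒯) (f : A₁ ⟶ A) (g : A ⟶ A₂) (h : A₂ ⟶ A₁⟦(1 : ℤ)⟧)
          (B₁ B₂ : 𝒯) (f' : B₁ ⟶ B) (g' : B ⟶ B₂) (h' : B₂ ⟶ B₁⟦(1 : ℤ)⟧),
        Triangle.mk f g h ∈ (distTriang 𝒯) → P A₁ →
        (∀ X : 𝒯, P X → ∀ ψ : X ⟶ A₂, ψ = 0) →
        Triangle.mk f' g' h' ∈ (distTriang 𝒯) → P B₁ →
        (∀ X : 𝒯, P X → ∀ ψ : X ⟶ B₂, ψ = 0) →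
        ∃! u : Triangle.mk f g h ⟶ Triangle.mk f' g' h', u.hom₂ = φ)) := by
  have forward : (∃ p : 𝒯 ⥤ ObjectProperty.FullSubcategory P,
      Nonempty (ObjectProperty.ι P ⊣ p)) →
      (∀ A : 𝒯, ∃ (A' : 𝒯) (_ : P A') (f : A' ⟶ A) (C : 𝒯) (g : A ⟶ C)
          (h : C ⟶ A'⟦(1 : ℤ)⟧),
        Triangle.mk f g h ∈ (distTriang 𝒯) ∧
        ∀ X : 𝒯, P X → ∀ φ : X ⟶ C, φ = 0) := by
    rintro ⟨p, ⟨adj⟩⟩ A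
    set i := ObjectProperty.ι P with hi
    set ε : i.obj (p.obj A) ⟶ A := adj.counit.app A with hε
    obtain ⟨C, g, h, hT⟩ := distinguished_cocone_triangle ε
    refine ⟨i.obj (p.obj A), (p.obj A).property, ε, C, g, h, hT, ?_⟩
    have keybij : ∀ (Y : 𝒯) (hY : P Y),
        Function.Bijective (fun β : Y ⟶ i.obj (p.obj A) => β ≫ ε) := by
      intro Y hY
      have : (fun β : Y ⟶ i.obj (p.obj A) => β ≫ ε) =
          fun β => (adj.homEquiv ⟨Y, hY⟩ A).symm (InducedCategory.homMk β) := by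
        funext β
        rw [adj.homEquiv_counit]
        rfl
      rw [this]
      exact (adj.homEquiv ⟨Y, hY⟩ A).symm.bijective.comp InducedCategory.homEquiv.symm.bijective
    intro X hX φ
    -- Step 1: `φ ≫ h = 0`.
    have hδε : (φ ≫ h) ≫ (shiftFunctor 𝒯 (1 : ℤ)).map ε = 0 := by
      rw [Category.assoc]
      have := comp_distTriang_mor_zero₃₁ _ hT
      change h ≫ (shiftFunctor 𝒯 (1 : ℤ)).map ε = 0 at this
      rw [this, comp_zero]
    have hδ : φ ≫ h = 0 := by
      set δ : X ⟶ (i.obj (p.obj A))⟦(1 : ℤ)⟧ := φ ≫ h with hδdef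
      set J := shiftFunctorCompIsoId 𝒯 (1 : ℤ) (-1 : ℤ) (by ring) with hJ
      have hnat := J.hom.naturality ε
      dsimp at hnat
      have h0 : ((shiftFunctor 𝒯 (-1 : ℤ)).map δ ≫ J.hom.app (i.obj (p.obj A))) ≫ ε
          = 0 := by
        rw [Category.assoc, ← hnat, ← Category.assoc, ← Functor.map_comp, hδε,
          Functor.map_zero, zero_comp]
      have h1 : (shiftFunctor 𝒯 (-1 : ℤ)).map δ ≫ J.hom.app (i.obj (p.obj A)) = 0 := by
        have := (keybij _ (hshift X (-1) hX)).injective (a₁ :=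
          (shiftFunctor 𝒯 (-1 : ℤ)).map δ ≫ J.hom.app (i.obj (p.obj A))) (a₂ := 0)
        simp only [zero_comp] at this
        exact this h0
      have h2 : (shiftFunctor 𝒯 (-1 : ℤ)).map δ = 0 := by
        rw [← cancel_mono (J.hom.app (i.obj (p.obj A))), zero_comp]
        exact h1
      apply (shiftFunctor 𝒯 (-1 : ℤ)).map_injective
      rw [h2, Functor.map_zero]
    -- Step 2: conclude `φ = 0`.
    obtain ⟨ψ, hψ⟩ := Triangle.coyoneda_exact₃ _ hT φ hδ
    obtain ⟨β, hβ⟩ := (keybij X hX).surjective ψ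
    have hεg : ε ≫ g = 0 := comp_distTriang_mor_zero₁₂ _ hT
    rw [hψ]
    dsimp at hβ ⊢
    rw [← hβ]; change (β ≫ ε) ≫ g = 0; rw [Category.assoc, hεg, comp_zero]
  have backward : (∀ A : 𝒯, ∃ (A' : 𝒯) (_ : P A') (f : A' ⟶ A) (C : 𝒯) (g : A ⟶ C)
          (h : C ⟶ A'⟦(1 : ℤ)⟧),
        Triangle.mk f g h ∈ (distTriang 𝒯) ∧
        ∀ X : 𝒯, P X → ∀ φ : X ⟶ C, φ = 0) →
      (∃ p : 𝒯 ⥤ ObjectProperty.FullSubcategory P,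
        Nonempty (ObjectProperty.ι P ⊣ p)) := by
    intro hAll
    choose A' hPA' f C g h hdist hvan using hAll
    let G_obj : 𝒯 → ObjectProperty.FullSubcategory P := fun A => ⟨A' A, hPA' A⟩
    have bij : ∀ (X : ObjectProperty.FullSubcategory P) (A : 𝒯),
        Function.Bijective (fun ψ : X ⟶ G_obj A => ψ.hom ≫ f A) := by
      intro X A
      constructor
      · intro ψ₁ ψ₂ hψ
        have hsub : (ψ₁.hom - ψ₂.hom) ≫ f A = 0 := by
          rw [Preadditive.sub_comp]
          dsimp at hψ
          rw [hψ, sub_self]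
        have := aux_cancel P hshift (hdist A) (hvan A) X.property _ hsub
        exact ObjectProperty.hom_ext P (sub_eq_zero.mp this)
      · intro α
        obtain ⟨ψ, hψ⟩ := Triangle.coyoneda_exact₂ _ (hdist A) α
          (hvan A _ X.property _)
        exact ⟨InducedCategory.homMk ψ, hψ.symm⟩
    have he : ∀ (X' X : ObjectProperty.FullSubcategory P) (A : 𝒯) (q : X' ⟶ X)
        (γ : (ObjectProperty.ι P).obj X ⟶ A),
        (Equiv.ofBijective _ (bij X' A)).symm ((ObjectProperty.ι P).map q ≫ γ) =
          q ≫ (Equiv.ofBijective _ (bij X A)).symm γ := by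
      intro X' X A q γ
      apply (Equiv.ofBijective _ (bij X' A)).injective
      rw [Equiv.apply_symm_apply]
      have h2 : ((Equiv.ofBijective _ (bij X A)).symm γ).hom
          ≫ f A = γ :=
        Equiv.apply_symm_apply (Equiv.ofBijective _ (bij X A)) γ
      change q.hom ≫ γ =
        (q.hom ≫
          ((Equiv.ofBijective _ (bij X A)).symm γ).hom) ≫ f A
      rw [Category.assoc, h2]
    exact ⟨Adjunction.rightAdjointOfEquiv
        (fun X A => (Equiv.ofBijective _ (bij X A)).symm) (fun X' X A q γ => he X' X A q γ),
      ⟨Adjunction.adjunctionOfEquivRight _ _⟩⟩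
  refine ⟨⟨forward, backward⟩, fun hadj => ⟨?_, ?_⟩⟩
  · intro A
    obtain ⟨A₁, hA₁, f, C, g, h, hdist, hvan⟩ := forward hadj A
    refine ⟨A₁, C, f, g, h, ⟨hdist, hA₁, hvan⟩, ?_⟩
    intro B₁ B₂ f' g' h' hdist' hB₁ hvan'
    obtain ⟨u, hu, huu⟩ := aux_orth P hshift (𝟙 A) hdist hA₁ hdist' hvan'
    obtain ⟨v, hv, hvv⟩ := aux_orth P hshift (𝟙 A) hdist' hB₁ hdist hvan
    obtain ⟨w, hw, hww⟩ := aux_orth P hshift (𝟙 A) hdist hA₁ hdist hvan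
    obtain ⟨w', hw', hww'⟩ := aux_orth P hshift (𝟙 A) hdist' hB₁ hdist' hvan'
    have huv : u ≫ v = 𝟙 _ := by
      rw [hww (u ≫ v) (by change u.hom₂ ≫ v.hom₂ = 𝟙 A; rw [hu, hv]; exact Category.comp_id (𝟙 A)),
        hww (𝟙 _) rfl]
    have hvu : v ≫ u = 𝟙 _ := by
      rw [hww' (v ≫ u) (by change v.hom₂ ≫ u.hom₂ = 𝟙 A; rw [hv, hu]; exact Category.comp_id (𝟙 A)),
        hww' (𝟙 _) rfl]
    exact ⟨⟨u, v, huv, hvu⟩, hu⟩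
  · intro A B φ A₁ A₂ f g h B₁ B₂ f' g' h' hTA hA₁ _ hTB _ hvB
    exact aux_orth P hshift φ hTA hA₁ hTB hvB
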